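/- Let G=(V,E_L,E_R) be an achievement positional game and let u∈V with {u}∉E_L. If Left has a winning (resp. non-losing) strategy as first player on G, then Left has a winning (resp. non-losing) strategy as first player on the updated game G_u. -/

import Mathlib

namespace APG

/-- The two players: Left and Right. -/
inductive Player : Type
  | L : Player
  | R : Player
deriving DecidableEq, Repr

/-- The opponent of a player. -/
def Player.other : Player → Player
  | .L => .R
  | .R => .L

/-- An achievement positional game: a finite vertex set together with the set of
blue edges (Left's winning sets) and the set of red edges (Right's winning sets). -/
structure Game : Type where
  V : Finset ℕ
  EL : Finset (Finset ℕ)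
  ER : Finset (Finset ℕ)

/-- The edges are nonempty subsets of the vertex set. -/
def WellFormed (G : Game) : Prop :=
  (∀ e ∈ G.EL, e ⊆ G.V ∧ e.Nonempty) ∧ (∀ e ∈ G.ER, e ⊆ G.V ∧ e.Nonempty)

/-- The winning sets of a given player. -/
def Game.edges (G : Game) : Player → Finset (Finset ℕ)
  | .L => G.EL
  | .R => G.ER

/-- The player who makes the `i`-th move (0-indexed) when `s` moves first. -/
def mover (s : Player) (i : ℕ) : Player := if i % 2 = 0 then s else s.other

/-- The set of vertices picked by player `p` along the history `h`
(the chronological list of the moves played so far), when `s` moved first. -/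
def picked (s p : Player) (h : List ℕ) : Finset ℕ :=
  ((Finset.range h.length).filter fun i => mover s i = p).image fun i => h.getD i 0

/-- The set `S` of picked vertices fills some edge of `E`. -/
def fills (E : Finset (Finset ℕ)) (S : Finset ℕ) : Prop := ∃ e ∈ E, e ⊆ S

/-- The game is over: some player has picked all the vertices of one of their edges. -/
def ended (G : Game) (s : Player) (h : List ℕ) : Prop :=
  fills G.EL (picked s .L h) ∨ fills G.ER (picked s .R h)

/-- `h` is a legal history: no vertex is picked twice, every picked vertex belongs to
the board, and no move is made after the game has ended. -/
def ValidHist (G : Game) (s : Player) (h : List ℕ) : Prop :=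
  h.Nodup ∧ (∀ x ∈ h, x ∈ G.V) ∧ ∀ k, k < h.length → ¬ ended G s (h.take k)

/-- A strategy: a map assigning to each position (history) a vertex to pick. -/
abbrev Strategy := List ℕ → ℕ

/-- Along `h`, every move of player `p` agrees with the strategy `σ`. -/
def Follows (s p : Player) (σ : Strategy) (h : List ℕ) : Prop :=
  ∀ k, k < h.length → mover s k = p → h.getD k 0 = σ (h.take k)

/-- A finished play: either the game has ended or all vertices have been picked. -/
def Complete (G : Game) (s : Player) (h : List ℕ) : Prop :=
  ended G s h ∨ h.length = G.V.card

/-- The strategy `σ` of player `p` always suggests a legal move (an unpicked vertex)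
whenever the game is not over and it is `p`'s turn. -/
def Legal (G : Game) (s p : Player) (σ : Strategy) : Prop :=
  ∀ h, ValidHist G s h → Follows s p σ h → ¬ ended G s h → h.length < G.V.card →
    mover s h.length = p → σ h ∈ G.V ∧ σ h ∉ h

/-- Player `p` has a winning strategy on `G` when `s` moves first: following it,
every finished play ends with `p` having filled one of their edges (and, the game
having ended right there, the opponent has not filled an edge first). -/
def WinsAs (G : Game) (s p : Player) : Prop :=
  ∃ σ : Strategy, Legal G s p σ ∧
    ∀ h, ValidHist G s h → Follows s p σ h → Complete G s h →
      fills (G.edges p) (picked s p h)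

/-- Player `p` has a non-losing strategy on `G` when `s` moves first: following it,
the opponent never fills one of their edges. -/
def NonLosingAs (G : Game) (s p : Player) : Prop :=
  ∃ σ : Strategy, Legal G s p σ ∧
    ∀ h, ValidHist G s h → Follows s p σ h → Complete G s h →
      ¬ fills (G.edges p.other) (picked s p.other h)

/-- The possible results of the game, for a fixed starting player. -/
inductive Result : Type
  | Lwin : Result
  | draw : Result
  | Rwin : Result
deriving DecidableEq, Repr

/-- The result of `G` with optimal play, when `s` moves first, is `r`:
a win for a player means that player has a winning strategy, a draw means
both players have non-losing strategies. -/
def resultIs (G : Game) (s : Player) : Result → Prop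
  | .Lwin => WinsAs G s .L
  | .Rwin => WinsAs G s .R
  | .draw => NonLosingAs G s .L ∧ NonLosingAs G s .R

/-- An outcome: the pair of results with optimal play
(when Left starts, when Right starts). -/
abbrev Outcome := Result × Result

/-- `G` has outcome `o`. -/
def hasOutcome (G : Game) (o : Outcome) : Prop :=
  resultIs G .L o.1 ∧ resultIs G .R o.2

/-- Numerical value of a result, from Left's point of view:
Right wins < draw < Left wins. -/
def Result.val : Result → ℕ
  | .Rwin => 0
  | .draw => 1
  | .Lwin => 2

/-- The partial order `≤_L` on outcomes, comparing both components simultaneously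
from Left's point of view. -/
def outLE (o o' : Outcome) : Prop := o.1.val ≤ o'.1.val ∧ o.2.val ≤ o'.2.val

def oL : Outcome := (.Lwin, .Lwin)
def oLminus : Outcome := (.Lwin, .draw)
def oN : Outcome := (.Lwin, .Rwin)
def oD : Outcome := (.draw, .draw)
def oRminus : Outcome := (.draw, .Rwin)
def oR : Outcome := (.Rwin, .Rwin)

/-- The updated game `G_u` after Left has picked `u`. -/
def subL (G : Game) (u : ℕ) : Game where
  V := G.V.erase u
  EL := G.EL.image fun e => e.erase u
  ER := G.ER.filter fun e => u ∉ e

/-- The updated game `G^u` after Right has picked `u`. -/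
def subR (G : Game) (u : ℕ) : Game where
  V := G.V.erase u
  EL := G.EL.filter fun e => u ∉ e
  ER := G.ER.image fun e => e.erase u

/-- The updated game `G_u^v` after Left has picked `u` and Right has picked `v`. -/
def updLR (G : Game) (u v : ℕ) : Game where
  V := (G.V.erase u).erase v
  EL := (G.EL.filter fun e => v ∉ e).image fun e => e.erase u
  ER := (G.ER.filter fun e => u ∉ e).image fun e => e.erase v

/-- The disjoint union of two games. -/
def gunion (G G' : Game) : Game where
  V := G.V ∪ G'.V
  EL := G.EL ∪ G'.EL
  ER := G.ER ∪ G'.ER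

-- ===================== AUX =====================

lemma mover_L_even {i : ℕ} (h : i % 2 = 0) : mover .L i = .L := by simp [mover, h]
lemma mover_L_odd {i : ℕ} (h : i % 2 = 1) : mover .L i = .R := by
  simp [mover, h, Player.other]
lemma mover_L_eq_L {i : ℕ} : mover .L i = .L ↔ i % 2 = 0 := by
  unfold mover; split <;> simp_all [Player.other]
lemma mover_L_eq_R {i : ℕ} : mover .L i = .R ↔ i % 2 = 1 := by
  unfold mover; split <;> simp_all [Player.other] <;> omega

lemma mem_picked {s p : Player} {h : List ℕ} {a : ℕ} :
    a ∈ picked s p h ↔ ∃ i, i < h.length ∧ mover s i = p ∧ h.getD i 0 = a := by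
  simp [picked, Finset.mem_image, Finset.mem_filter, Finset.mem_range]
  constructor
  · rintro ⟨i, ⟨hi, hm⟩, he⟩; exact ⟨i, hi, hm, he⟩
  · rintro ⟨i, hi, hm, he⟩; exact ⟨i, ⟨hi, hm⟩, he⟩

lemma picked_nil (s p : Player) : picked s p [] = ∅ := by simp [picked]

lemma mem_of_mem_picked {s p : Player} {h : List ℕ} {a : ℕ} (ha : a ∈ picked s p h) :
    a ∈ h := by
  rcases mem_picked.1 ha with ⟨i, hi, _, he⟩
  subst he; rw [List.getD_eq_getElem _ _ hi]; exact List.getElem_mem _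

lemma mem_picked_or {s : Player} {h : List ℕ} {a : ℕ} (ha : a ∈ h) :
    a ∈ picked s .L h ∨ a ∈ picked s .R h := by
  rcases List.mem_iff_getElem.1 ha with ⟨i, hi, he⟩
  have hd : h.getD i 0 = a := by rw [List.getD_eq_getElem _ _ hi]; exact he
  cases hm : mover s i
  · exact Or.inl (mem_picked.2 ⟨i, hi, hm, hd⟩)
  · exact Or.inr (mem_picked.2 ⟨i, hi, hm, hd⟩)

lemma picked_concat (s p : Player) (h : List ℕ) (x : ℕ) :
    picked s p (h ++ [x]) =
      if mover s h.length = p then insert x (picked s p h) else picked s p h := by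
  ext a
  have hlen : (h ++ [x]).length = h.length + 1 := by simp
  have hgetD : ∀ i, i < h.length → (h ++ [x]).getD i 0 = h.getD i 0 := by
    intro i hi
    rw [List.getD_eq_getElem _ _ (by simp; omega), List.getD_eq_getElem _ _ hi]
    exact List.getElem_append_left hi
  have hgetL : (h ++ [x]).getD h.length 0 = x := by simp [List.getD]
  simp only [mem_picked, hlen]
  split
  case isTrue hm =>
    simp only [Finset.mem_insert, mem_picked]
    constructor
    · rintro ⟨i, hi, hmi, he⟩
      rcases Nat.lt_succ_iff_lt_or_eq.1 hi with hi' | rfl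
      · exact Or.inr ⟨i, hi', hmi, by rw [← hgetD i hi']; exact he⟩
      · exact Or.inl (by rw [← hgetL]; exact he.symm)
    · rintro (rfl | ⟨i, hi, hmi, he⟩)
      · exact ⟨h.length, by omega, hm, hgetL⟩
      · exact ⟨i, by omega, hmi, by rw [hgetD i hi]; exact he⟩
  case isFalse hm =>
    simp only [mem_picked]
    constructor
    · rintro ⟨i, hi, hmi, he⟩
      have hi' : i < h.length := by
        rcases Nat.lt_succ_iff_lt_or_eq.1 hi with hi' | rfl
        · exact hi'
        · exact absurd hmi hm
      exact ⟨i, hi', hmi, by rw [← hgetD i hi']; exact he⟩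
    · rintro ⟨i, hi, hmi, he⟩
      exact ⟨i, by omega, hmi, by rw [hgetD i hi]; exact he⟩

lemma fills_mono {E : Finset (Finset ℕ)} {S T : Finset ℕ} (hST : S ⊆ T) :
    fills E S → fills E T := fun ⟨e, he, hs⟩ => ⟨e, he, hs.trans hST⟩

lemma valid_concat_left {G : Game} {s : Player} {h : List ℕ} {x : ℕ}
    (hv : ValidHist G s (h ++ [x])) : ValidHist G s h := by
  obtain ⟨hnd, hmem, hend⟩ := hv
  refine ⟨(List.nodup_append.1 hnd).1, fun y hy => hmem y (by simp [hy]), fun k hk => ?_⟩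
  have := hend k (by simp; omega)
  rwa [List.take_append_of_le_length (by omega)] at this

lemma valid_not_ended_dropLast {G : Game} {s : Player} {h : List ℕ} {x : ℕ}
    (hv : ValidHist G s (h ++ [x])) : ¬ ended G s h := by
  have := hv.2.2 h.length (by simp)
  rwa [List.take_left] at this

lemma follows_concat_left {s p : Player} {σ : Strategy} {h : List ℕ} {x : ℕ}
    (hf : Follows s p σ (h ++ [x])) : Follows s p σ h := by
  intro k hk hm
  have := hf k (by simp; omega) hm
  rw [List.take_append_of_le_length (by omega)] at this
  rw [← this]
  rw [List.getD_eq_getElem _ _ hk, List.getD_eq_getElem _ _ (by simp; omega)]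
  exact (List.getElem_append_left hk).symm

lemma follows_concat {s p : Player} {σ : Strategy} {h : List ℕ} {x : ℕ}
    (hf : Follows s p σ h) (hx : mover s h.length = p → x = σ h) :
    Follows s p σ (h ++ [x]) := by
  intro k hk hm
  simp only [List.length_append, List.length_singleton] at hk
  rcases Nat.lt_succ_iff_lt_or_eq.1 hk with hk' | rfl
  · rw [List.take_append_of_le_length (by omega)]
    rw [List.getD_eq_getElem _ _ (by simp; omega)]
    rw [List.getElem_append_left hk']
    rw [← List.getD_eq_getElem _ _ hk']
    exact hf k hk' hm
  · rw [List.take_left]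
    have : (h ++ [x]).getD h.length 0 = x := by simp [List.getD]
    rw [this]
    exact hx hm

lemma valid_concat {G : Game} {s : Player} {h : List ℕ} {x : ℕ}
    (hv : ValidHist G s h) (hx1 : x ∈ G.V) (hx2 : x ∉ h) (hne : ¬ ended G s h) :
    ValidHist G s (h ++ [x]) := by
  obtain ⟨hnd, hmem, hend⟩ := hv
  refine ⟨by simp [List.nodup_append, hnd, hx2]; exact fun a ha hax => hx2 (hax ▸ ha), ?_, ?_⟩
  · intro y hy; rcases List.mem_append.1 hy with hy | hy
    · exact hmem y hy
    · simp at hy; subst hy; exact hx1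
  · intro k hk
    simp only [List.length_append, List.length_singleton] at hk
    rcases Nat.lt_succ_iff_lt_or_eq.1 hk with hk' | rfl
    · rw [List.take_append_of_le_length (by omega)]; exact hend k hk'
    · rw [List.take_left]; exact hne

lemma length_le_card {G : Game} {s : Player} {h : List ℕ} (hv : ValidHist G s h) :
    h.length ≤ G.V.card := by
  have h1 : h.toFinset.card = h.length := List.toFinset_card_of_nodup hv.1
  have h2 : h.toFinset ⊆ G.V := fun y hy => hv.2.1 y (List.mem_toFinset.1 hy)
  calc h.length = h.toFinset.card := h1.symm
    _ ≤ G.V.card := Finset.card_le_card h2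

/-- transfer of non-endedness from real to imagined game -/
lemma ended_transfer {G : Game} {u : ℕ} {h H : List ℕ}
    (hR : picked .L .R H = picked .L .R h)
    (hL : picked .L .L H \ {u} ⊆ picked .L .L h)
    (hu_h : u ∉ h) :
    ended G .L H → ended (subL G u) .L h := by
  rintro (⟨e, he, hs⟩ | ⟨e, he, hs⟩)
  · left
    refine ⟨e.erase u, ?_, ?_⟩
    · simp only [subL, Finset.mem_image]; exact ⟨e, he, rfl⟩
    · intro y hy
      rcases Finset.mem_erase.1 hy with ⟨hyu, hye⟩
      exact hL (Finset.mem_sdiff.2 ⟨hs hye, by simp [hyu]⟩)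
  · right
    refine ⟨e, ?_, ?_⟩
    · simp only [subL, Finset.mem_filter]
      refine ⟨he, fun hue => ?_⟩
      have : u ∈ picked .L .R h := hR ▸ hs hue
      exact hu_h (mem_of_mem_picked this)
    · rw [← hR]; exact hs

/-- a fresh junk vertex -/
def junk (G : Game) (u : ℕ) (h : List ℕ) : ℕ :=
  if hne : ((G.V.erase u) \ h.toFinset).Nonempty then ((G.V.erase u) \ h.toFinset).min' hne
  else 0

lemma junk_spec {G : Game} {u : ℕ} {h : List ℕ} (hnd : h.Nodup)
    (hsub : ∀ x ∈ h, x ∈ G.V.erase u) (hlt : h.length < (G.V.erase u).card) :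
    junk G u h ∈ G.V.erase u ∧ junk G u h ∉ h := by
  have hne : ((G.V.erase u) \ h.toFinset).Nonempty := by
    rw [← Finset.card_pos, Finset.card_sdiff_of_subset (fun y hy => hsub y (List.mem_toFinset.1 hy))]
    rw [List.toFinset_card_of_nodup hnd]; omega
  have hmem : junk G u h ∈ (G.V.erase u) \ h.toFinset := by
    rw [junk, dif_pos hne]; exact Finset.min'_mem _ hne
  rcases Finset.mem_sdiff.1 hmem with ⟨h1, h2⟩
  exact ⟨h1, fun hc => h2 (List.mem_toFinset.2 hc)⟩

/-- the simulated (imagined) history, built from the reversed real history -/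
def simA (σ : Strategy) : List ℕ → List ℕ
  | [] => [σ []]
  | x :: t => if t.length % 2 = 0 then simA σ t
              else (simA σ t ++ [x]) ++ [σ (simA σ t ++ [x])]

def sim (σ : Strategy) (h : List ℕ) : List ℕ := simA σ h.reverse

lemma sim_nil (σ : Strategy) : sim σ [] = [σ []] := by simp [sim, simA]

lemma sim_concat_even (σ : Strategy) (h : List ℕ) (x : ℕ) (he : h.length % 2 = 0) :
    sim σ (h ++ [x]) = sim σ h := by
  simp [sim, simA, he]

lemma sim_concat_odd (σ : Strategy) (h : List ℕ) (x : ℕ) (he : h.length % 2 = 1) :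
    sim σ (h ++ [x]) = (sim σ h ++ [x]) ++ [σ (sim σ h ++ [x])] := by
  simp [sim, simA, he]

/-- the strategy for Left on the updated game -/
def tau (G : Game) (u : ℕ) (σ : Strategy) (h : List ℕ) : ℕ :=
  let a := (sim σ h).getLast?.getD 0
  if a ≠ u ∧ a ∉ h then a else junk G u h

lemma not_ended_nil {G : Game} {s : Player} (hG : WellFormed G) : ¬ ended G s [] := by
  rintro (⟨e, he, hs⟩ | ⟨e, he, hs⟩)
  · rw [picked_nil, Finset.subset_empty] at hs
    exact (hG.1 e he).2.ne_empty hs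
  · rw [picked_nil, Finset.subset_empty] at hs
    exact (hG.2 e he).2.ne_empty hs

lemma valid_nil (G : Game) (s : Player) : ValidHist G s [] :=
  ⟨List.nodup_nil, by simp, fun k hk => absurd hk (by simp)⟩

lemma follows_nil (s p : Player) (σ : Strategy) : Follows s p σ [] :=
  fun k hk _ => absurd hk (by simp)

lemma getLast_concat' (K : List ℕ) (a : ℕ) : (K ++ [a]).getLast?.getD 0 = a := by
  simp

/-- The invariant after an odd number of real moves. -/
def InvO (G : Game) (u : ℕ) (σ : Strategy) (h : List ℕ) : Prop :=
  (sim σ h).length = h.length ∧ ValidHist G .L (sim σ h) ∧ Follows .L .L σ (sim σ h) ∧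
  picked .L .R (sim σ h) = picked .L .R h ∧ picked .L .L (sim σ h) \ {u} ⊆ picked .L .L h

/-- The invariant after an even number of real moves. -/
def InvE (G : Game) (u : ℕ) (σ : Strategy) (h : List ℕ) : Prop :=
  ∃ K a, sim σ h = K ++ [a] ∧ K.length = h.length ∧ ValidHist G .L K ∧
    Follows .L .L σ K ∧ ¬ ended G .L K ∧ a = σ K ∧ a ∈ G.V ∧ a ∉ K ∧
    picked .L .R K = picked .L .R h ∧ picked .L .L K \ {u} ⊆ picked .L .L h

lemma main_inv (G : Game) (hG : WellFormed G) (u : ℕ) (hu : u ∈ G.V) (σ : Strategy)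
    (hLegal : Legal G .L .L σ) :
    ∀ h : List ℕ, ValidHist (subL G u) .L h → Follows .L .L (tau G u σ) h →
      ¬ ended (subL G u) .L h →
      (h.length % 2 = 0 → InvE G u σ h) ∧ (h.length % 2 = 1 → InvO G u σ h) := by
  intro h
  induction h using List.reverseRecOn with
  | nil =>
    intro _ _ _
    refine ⟨fun _ => ?_, fun hc => by simp at hc⟩
    have hσ := hLegal [] (valid_nil G .L) (follows_nil .L .L σ) (not_ended_nil hG)
      (Finset.card_pos.2 ⟨u, hu⟩) (mover_L_even rfl)
    exact ⟨[], σ [], by simp [sim_nil], rfl, valid_nil G .L, follows_nil .L .L σ,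
      not_ended_nil hG, rfl, hσ.1, hσ.2, by simp [picked_nil],
      by simp [picked_nil]⟩
  | append_singleton h x ih =>
    intro hv' hf' hne'
    have hv : ValidHist (subL G u) .L h := valid_concat_left hv'
    have hf : Follows .L .L (tau G u σ) h := follows_concat_left hf'
    have hne : ¬ ended (subL G u) .L h := valid_not_ended_dropLast hv'
    have IH := ih hv hf hne
    have hxV : x ∈ G.V.erase u := hv'.2.1 x (by simp)
    have hxh : x ∉ h := by
      have hnd := hv'.1
      rw [List.nodup_append] at hnd
      exact fun hc => hnd.2.2 x hc x (by simp) rfl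
    have huh : u ∉ h := fun hc => (Finset.mem_erase.1 (hv.2.1 u hc)).1 rfl
    rcases Nat.even_or_odd h.length with hpar | hpar
    · -- h even, so x is Left's move; prove InvO for h ++ [x]
      have hpar0 : h.length % 2 = 0 := Nat.even_iff.1 hpar
      obtain ⟨K, a, hsim, hKlen, hKv, hKf, hKne, haσ, haV, haK, hpR, hpL⟩ := IH.1 hpar0
      refine ⟨fun hc => by simp [hpar0] at hc; omega, fun _ => ?_⟩
      have hmovL : mover .L h.length = .L := mover_L_even hpar0
      -- x follows tau
      have hx : x = tau G u σ h := by
        have := hf' h.length (by simp) hmovL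
        rw [List.take_left] at this
        rw [← this]
        simp [List.getD]
      have hsimx : sim σ (h ++ [x]) = sim σ h := sim_concat_even σ h x hpar0
      have hHv : ValidHist G .L (sim σ h) := by
        rw [hsim]; exact valid_concat hKv haV haK hKne
      have hHf : Follows .L .L σ (sim σ h) := by
        rw [hsim]; exact follows_concat hKf (fun _ => haσ)
      have hHlen : (sim σ h).length = h.length + 1 := by rw [hsim]; simp [hKlen]
      have hmovK : mover .L K.length = .L := by rw [hKlen]; exact hmovL
      have hpRH : picked .L .R (sim σ h) = picked .L .R h := by
        rw [hsim, picked_concat, hmovK]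
        simpa using hpR
      have hpRx : picked .L .R (h ++ [x]) = picked .L .R h := by
        rw [picked_concat, hmovL]; simp
      have hpLH : picked .L .L (sim σ h) = insert a (picked .L .L K) := by
        rw [hsim, picked_concat, if_pos hmovK]
      have hpLx : picked .L .L (h ++ [x]) = insert x (picked .L .L h) := by
        rw [picked_concat, if_pos hmovL]
      refine ⟨by rw [hsimx, hHlen]; simp, by rw [hsimx]; exact hHv,
        by rw [hsimx]; exact hHf, by rw [hsimx, hpRH, hpRx],
        ?_⟩
      rw [hsimx, hpLH, hpLx]
      have hgetL : (sim σ h).getLast?.getD 0 = a := by rw [hsim]; exact getLast_concat' K a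
      by_cases hc : a ≠ u ∧ a ∉ h
      · have hxa : x = a := by rw [hx, tau]; simp only [hgetL]; rw [if_pos hc]
        intro y hy
        rcases Finset.mem_sdiff.1 hy with ⟨hy1, hy2⟩
        rcases Finset.mem_insert.1 hy1 with rfl | hy1
        · exact Finset.mem_insert.2 (Or.inl hxa.symm)
        · exact Finset.mem_insert.2 (Or.inr (hpL (Finset.mem_sdiff.2 ⟨hy1, hy2⟩)))
      · push_neg at hc
        have hah : a ∈ picked .L .L h ∨ a = u := by
          by_cases hau : a = u
          · exact Or.inr hau
          · rcases mem_picked_or (s := .L) (hc hau) with h1 | h1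
            · exact Or.inl h1
            · exact absurd (mem_of_mem_picked (hpR ▸ h1)) haK
        intro y hy
        rcases Finset.mem_sdiff.1 hy with ⟨hy1, hy2⟩
        rcases Finset.mem_insert.1 hy1 with rfl | hy1
        · rcases hah with h1 | rfl
          · exact Finset.mem_insert.2 (Or.inr h1)
          · exact absurd (Finset.mem_singleton_self _) hy2
        · exact Finset.mem_insert.2 (Or.inr (hpL (Finset.mem_sdiff.2 ⟨hy1, hy2⟩)))
    · -- h odd, x is Right's move; prove InvE for h ++ [x]
      have hpar1 : h.length % 2 = 1 := Nat.odd_iff.1 hpar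
      obtain ⟨hHlen, hHv, hHf, hpR, hpL⟩ := IH.2 hpar1
      refine ⟨fun _ => ?_, fun hc => by simp [hpar1] at hc; omega⟩
      set H := sim σ h with hH
      have hneH : ¬ ended G .L H := fun he => hne (ended_transfer hpR hpL huh he)
      have hxH : x ∉ H := by
        intro hc
        rcases mem_picked_or (s := .L) hc with h1 | h1
        · have : x ∈ picked .L .L H \ {u} :=
            Finset.mem_sdiff.2 ⟨h1, by simp [(Finset.mem_erase.1 hxV).1]⟩
          exact hxh (mem_of_mem_picked (hpL this))
        · exact hxh (mem_of_mem_picked (hpR ▸ h1))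
      have hmovH : mover .L H.length = .R := by rw [hHlen]; exact mover_L_odd hpar1
      have hKv : ValidHist G .L (H ++ [x]) :=
        valid_concat hHv (Finset.mem_of_mem_erase hxV) hxH hneH
      have hKf : Follows .L .L σ (H ++ [x]) :=
        follows_concat hHf (fun hm => absurd (hmovH.symm.trans hm) (by decide))
      have hmovx : mover .L h.length = .R := mover_L_odd hpar1
      have hpRK : picked .L .R (H ++ [x]) = picked .L .R (h ++ [x]) := by
        rw [picked_concat, if_pos hmovH, picked_concat, if_pos hmovx, hpR]
      have hpLK : picked .L .L (H ++ [x]) = picked .L .L H := by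
        rw [picked_concat, hmovH]; simp
      have hpLx : picked .L .L (h ++ [x]) = picked .L .L h := by
        rw [picked_concat, hmovx]; simp
      have hpLK' : picked .L .L (H ++ [x]) \ {u} ⊆ picked .L .L (h ++ [x]) := by
        rw [hpLK, hpLx]; exact hpL
      have huhx : u ∉ h ++ [x] := by
        intro hc
        rcases List.mem_append.1 hc with hc | hc
        · exact huh hc
        · simp at hc; exact (Finset.mem_erase.1 hxV).1 hc.symm
      have hneK : ¬ ended G .L (H ++ [x]) :=
        fun he => hne' (ended_transfer hpRK hpLK' huhx he)
      have hKlen : (H ++ [x]).length = (h ++ [x]).length := by simp [hHlen]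
      have hcard : (H ++ [x]).length < G.V.card := by
        have h1 : (h ++ [x]).length ≤ (subL G u).V.card := length_le_card hv'
        have h2 : (subL G u).V.card < G.V.card := by
          simp only [subL]
          have := Finset.card_erase_add_one hu
          omega
        omega
      have hmovK : mover .L (H ++ [x]).length = .L := by
        rw [hKlen]
        refine mover_L_even ?_
        simp; omega
      have hσ := hLegal (H ++ [x]) hKv hKf hneK hcard hmovK
      refine ⟨H ++ [x], σ (H ++ [x]), sim_concat_odd σ h x hpar1, hKlen, hKv, hKf,
        hneK, rfl, hσ.1, hσ.2, hpRK, hpLK'⟩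

lemma tau_legal (G : Game) (hG : WellFormed G) (u : ℕ) (hu : u ∈ G.V) (σ : Strategy)
    (hLegal : Legal G .L .L σ) : Legal (subL G u) .L .L (tau G u σ) := by
  intro h hv hf hne hlen hmov
  have hpar0 : h.length % 2 = 0 := mover_L_eq_L.1 hmov
  obtain ⟨K, a, hsim, hKlen, hKv, hKf, hKne, haσ, haV, haK, hpR, hpL⟩ :=
    (main_inv G hG u hu σ hLegal h hv hf hne).1 hpar0
  have hgetL : (sim σ h).getLast?.getD 0 = a := by rw [hsim]; exact getLast_concat' K a
  by_cases hc : a ≠ u ∧ a ∉ h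
  · have hxa : tau G u σ h = a := by rw [tau]; simp only [hgetL]; rw [if_pos hc]
    rw [hxa]
    exact ⟨by simp only [subL]; exact Finset.mem_erase.2 ⟨hc.1, haV⟩, hc.2⟩
  · have hxa : tau G u σ h = junk G u h := by rw [tau]; simp only [hgetL]; rw [if_neg hc]
    rw [hxa]
    have := junk_spec (G := G) (u := u) hv.1 (fun y hy => hv.2.1 y hy) (by
      simpa only [subL] using hlen)
    exact ⟨this.1, this.2⟩

/-- Construction of the completed imagined history when the real game ends
with a Right move. -/
lemma endR_K (G : Game) (hG : WellFormed G) (u : ℕ) (hu : u ∈ G.V) (σ : Strategy)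
    (hLegal : Legal G .L .L σ) {h : List ℕ} {x : ℕ}
    (hv' : ValidHist (subL G u) .L (h ++ [x]))
    (hf' : Follows .L .L (tau G u σ) (h ++ [x])) (hpar1 : h.length % 2 = 1) :
    ∃ K : List ℕ, ValidHist G .L K ∧ Follows .L .L σ K ∧
      picked .L .R K = picked .L .R (h ++ [x]) ∧
      picked .L .L K \ {u} ⊆ picked .L .L h := by
  have hv : ValidHist (subL G u) .L h := valid_concat_left hv'
  have hf : Follows .L .L (tau G u σ) h := follows_concat_left hf'
  have hne : ¬ ended (subL G u) .L h := valid_not_ended_dropLast hv'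
  obtain ⟨hHlen, hHv, hHf, hpR, hpL⟩ :=
    (main_inv G hG u hu σ hLegal h hv hf hne).2 hpar1
  set H := sim σ h with hH
  have hxV : x ∈ G.V.erase u := hv'.2.1 x (by simp)
  have hxh : x ∉ h := by
    have hnd := hv'.1
    rw [List.nodup_append] at hnd
    exact fun hc => hnd.2.2 x hc x (by simp) rfl
  have huh : u ∉ h := fun hc => (Finset.mem_erase.1 (hv.2.1 u hc)).1 rfl
  have hneH : ¬ ended G .L H := fun he => hne (ended_transfer hpR hpL huh he)
  have hxH : x ∉ H := by
    intro hc
    rcases mem_picked_or (s := .L) hc with h1 | h1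
    · have : x ∈ picked .L .L H \ {u} :=
        Finset.mem_sdiff.2 ⟨h1, by simp [(Finset.mem_erase.1 hxV).1]⟩
      exact hxh (mem_of_mem_picked (hpL this))
    · exact hxh (mem_of_mem_picked (hpR ▸ h1))
  have hmovH : mover .L H.length = .R := by rw [hHlen]; exact mover_L_odd hpar1
  have hmovx : mover .L h.length = .R := mover_L_odd hpar1
  refine ⟨H ++ [x], valid_concat hHv (Finset.mem_of_mem_erase hxV) hxH hneH,
    follows_concat hHf (fun hm => absurd (hmovH.symm.trans hm) (by decide)), ?_, ?_⟩
  · rw [picked_concat, if_pos hmovH, picked_concat, if_pos hmovx, hpR]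
  · rw [picked_concat, hmovH]; simpa using hpL

lemma not_fills_ER_sub {G : Game} (hG : WellFormed G) {u : ℕ} :
    ¬ fills (subL G u).ER (∅ : Finset ℕ) := by
  rintro ⟨e, he, hs⟩
  rw [Finset.subset_empty] at hs
  have : e ∈ G.ER := (Finset.mem_filter.1 (by simpa only [subL] using he)).1
  exact (hG.2 e this).2.ne_empty hs

/-- Key: a Right fill in the real game is impossible when Left plays `tau`. -/
lemma no_right_fill (G : Game) (hG : WellFormed G) (u : ℕ) (hu : u ∈ G.V) (σ : Strategy)
    (hLegal : Legal G .L .L σ)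
    (hσ : ∀ K, ValidHist G .L K → Follows .L .L σ K → Complete G .L K →
      ¬ fills G.ER (picked .L .R K))
    {h : List ℕ} (hv : ValidHist (subL G u) .L h)
    (hf : Follows .L .L (tau G u σ) h) :
    ¬ fills (subL G u).ER (picked .L .R h) := by
  intro hfill
  rcases eq_or_ne h [] with rfl | hne0
  · rw [picked_nil] at hfill
    exact not_fills_ER_sub hG hfill
  obtain ⟨h₀, x, rfl⟩ : ∃ h₀ x, h = h₀ ++ [x] :=
    ⟨h.dropLast, h.getLast hne0, (List.dropLast_append_getLast hne0).symm⟩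
  have hne₀ : ¬ ended (subL G u) .L h₀ := valid_not_ended_dropLast hv
  rcases Nat.even_or_odd h₀.length with hpar | hpar
  · -- x is Left's move: the fill already existed
    have hmov : mover .L h₀.length = .L := mover_L_even (Nat.even_iff.1 hpar)
    rw [picked_concat, hmov] at hfill
    simp only [reduceCtorEq, if_false] at hfill
    exact hne₀ (Or.inr hfill)
  · obtain ⟨K, hKv, hKf, hKR, hKL⟩ :=
      endR_K G hG u hu σ hLegal hv hf (Nat.odd_iff.1 hpar)
    obtain ⟨e, he, hs⟩ := hfill
    have heER : e ∈ G.ER := (Finset.mem_filter.1 (by simpa only [subL] using he)).1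
    have hKend : ended G .L K := Or.inr ⟨e, heER, by rw [hKR]; exact hs⟩
    exact hσ K hKv hKf (Or.inl hKend) ⟨e, heER, by rw [hKR]; exact hs⟩

/-- Completion of the imagined history when the real board is full. -/
lemma full_board_K (G : Game) (hG : WellFormed G) (u : ℕ) (hu : u ∈ G.V) (σ : Strategy)
    (hLegal : Legal G .L .L σ) {h : List ℕ}
    (hv : ValidHist (subL G u) .L h) (hf : Follows .L .L (tau G u σ) h)
    (hend : ¬ ended (subL G u) .L h) (hlen : h.length = (subL G u).V.card) :
    ∃ H : List ℕ, ValidHist G .L H ∧ Follows .L .L σ H ∧ Complete G .L H ∧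
      picked .L .L H \ {u} ⊆ picked .L .L h ∧ picked .L .R h ⊆ picked .L .R H := by
  have hlen' : h.length = (G.V.erase u).card := by simpa only [subL] using hlen
  have hcardV : (G.V.erase u).card + 1 = G.V.card := Finset.card_erase_add_one hu
  have huh : u ∉ h := fun hc => (Finset.mem_erase.1 (hv.2.1 u hc)).1 rfl
  rcases Nat.even_or_odd h.length with hpar | hpar
  · -- even: the pending move `a` completes the imagined history
    obtain ⟨K, a, hsim, hKlen, hKv, hKf, hKne, haσ, haV, haK, hpR, hpL⟩ :=
      (main_inv G hG u hu σ hLegal h hv hf hend).1 (Nat.even_iff.1 hpar)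
    have htofin : h.toFinset = G.V.erase u := by
      refine Finset.eq_of_subset_of_card_le
        (fun y hy => hv.2.1 y (List.mem_toFinset.1 hy)) ?_
      rw [List.toFinset_card_of_nodup hv.1, ← hlen']
    have hah : a ∈ picked .L .L h ∨ a = u := by
      by_cases hau : a = u
      · exact Or.inr hau
      · have haE : a ∈ G.V.erase u := Finset.mem_erase.2 ⟨hau, haV⟩
        have : a ∈ h := List.mem_toFinset.1 (htofin ▸ haE)
        rcases mem_picked_or (s := .L) this with h1 | h1
        · exact Or.inl h1
        · exact absurd (mem_of_mem_picked (hpR ▸ h1)) haK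
    have hmovK : mover .L K.length = .L := by
      rw [hKlen]; exact mover_L_even (Nat.even_iff.1 hpar)
    refine ⟨K ++ [a], valid_concat hKv haV haK hKne,
      follows_concat hKf (fun _ => haσ), Or.inr ?_, ?_, ?_⟩
    · simp [hKlen, hlen']; omega
    · rw [picked_concat, if_pos hmovK]
      intro y hy
      rcases Finset.mem_sdiff.1 hy with ⟨hy1, hy2⟩
      rcases Finset.mem_insert.1 hy1 with rfl | hy1
      · rcases hah with h1 | rfl
        · exact h1
        · exact absurd (Finset.mem_singleton_self _) hy2
      · exact hpL (Finset.mem_sdiff.2 ⟨hy1, hy2⟩)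
    · rw [picked_concat, hmovK]
      simp only [reduceCtorEq, if_false]
      rw [hpR]
  · -- odd: one imagined Right move is missing
    obtain ⟨hHlen, hHv, hHf, hpR, hpL⟩ :=
      (main_inv G hG u hu σ hLegal h hv hf hend).2 (Nat.odd_iff.1 hpar)
    set H := sim σ h with hH
    have hneH : ¬ ended G .L H := fun he => hend (ended_transfer hpR hpL huh he)
    have hmne : (G.V \ H.toFinset).Nonempty := by
      rw [← Finset.card_pos,
        Finset.card_sdiff_of_subset (fun y hy => hHv.2.1 y (List.mem_toFinset.1 hy))]
      rw [List.toFinset_card_of_nodup hHv.1, hHlen, hlen']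
      omega
    obtain ⟨m, hm⟩ := hmne
    rcases Finset.mem_sdiff.1 hm with ⟨hmV, hmH⟩
    have hmH' : m ∉ H := fun hc => hmH (List.mem_toFinset.2 hc)
    have hmovH : mover .L H.length = .R := by
      rw [hHlen]; exact mover_L_odd (Nat.odd_iff.1 hpar)
    refine ⟨H ++ [m], valid_concat hHv hmV hmH' hneH,
      follows_concat hHf (fun hm2 => absurd (hmovH.symm.trans hm2) (by decide)),
      Or.inr ?_, ?_, ?_⟩
    · simp [hHlen, hlen']; omega
    · rw [picked_concat, hmovH]
      simp only [reduceCtorEq, if_false]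
      exact hpL
    · rw [picked_concat, if_pos hmovH, ← hpR]
      exact Finset.subset_insert _ _

theorem updated_first (G : Game) (hG : WellFormed G) (u : ℕ)
    (hu : u ∈ G.V) (hu' : ({u} : Finset ℕ) ∉ G.EL) :
    (WinsAs G .L .L → WinsAs (subL G u) .L .L) ∧
    (NonLosingAs G .L .L → NonLosingAs (subL G u) .L .L) := by
  constructor
  · rintro ⟨σ, hLegal, hwin⟩
    refine ⟨tau G u σ, tau_legal G hG u hu σ hLegal, ?_⟩
    intro h hv hf hcomp
    show fills (subL G u).EL (picked .L .L h)
    by_cases hend : ended (subL G u) .L h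
    · rcases hend with hL | hR
      · exact hL
      · exfalso
        rcases eq_or_ne h [] with rfl | hne0
        · rw [picked_nil] at hR
          exact not_fills_ER_sub hG hR
        obtain ⟨h₀, x, rfl⟩ : ∃ h₀ x, h = h₀ ++ [x] :=
          ⟨h.dropLast, h.getLast hne0, (List.dropLast_append_getLast hne0).symm⟩
        have hne₀ : ¬ ended (subL G u) .L h₀ := valid_not_ended_dropLast hv
        rcases Nat.even_or_odd h₀.length with hpar | hpar
        · have hmov : mover .L h₀.length = .L := mover_L_even (Nat.even_iff.1 hpar)
          rw [picked_concat, hmov] at hR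
          simp only [reduceCtorEq, if_false] at hR
          exact hne₀ (Or.inr hR)
        · obtain ⟨K, hKv, hKf, hKR, hKL⟩ :=
            endR_K G hG u hu σ hLegal hv hf (Nat.odd_iff.1 hpar)
          obtain ⟨e, he, hs⟩ := hR
          have heER : e ∈ G.ER := (Finset.mem_filter.1 (by simpa only [subL] using he)).1
          have hKend : ended G .L K := Or.inr ⟨e, heER, by rw [hKR]; exact hs⟩
          obtain ⟨e', he', hs'⟩ := hwin K hKv hKf (Or.inl hKend)
          refine hne₀ (Or.inl ⟨e'.erase u, ?_, ?_⟩)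
          · simp only [subL, Finset.mem_image]; exact ⟨e', he', rfl⟩
          · intro y hy
            rcases Finset.mem_erase.1 hy with ⟨hyu, hye⟩
            exact hKL (Finset.mem_sdiff.2 ⟨hs' hye, by simp [hyu]⟩)
    · have hlen : h.length = (subL G u).V.card := by
        rcases hcomp with hc | hc
        · exact absurd hc hend
        · exact hc
      obtain ⟨H, hHv, hHf, hHc, hHL, _⟩ :=
        full_board_K G hG u hu σ hLegal hv hf hend hlen
      obtain ⟨e, he, hs⟩ := hwin H hHv hHf hHc
      refine ⟨e.erase u, ?_, ?_⟩
      · simp only [subL, Finset.mem_image]; exact ⟨e, he, rfl⟩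
      · intro y hy
        rcases Finset.mem_erase.1 hy with ⟨hyu, hye⟩
        exact hHL (Finset.mem_sdiff.2 ⟨hs hye, by simp [hyu]⟩)
  · rintro ⟨σ, hLegal, hnl⟩
    refine ⟨tau G u σ, tau_legal G hG u hu σ hLegal, ?_⟩
    intro h hv hf _
    show ¬ fills (subL G u).ER (picked .L .R h)
    exact no_right_fill G hG u hu σ hLegal (fun K h1 h2 h3 => hnl K h1 h2 h3) hv hf


/-- If Left has a winning (resp. non-losing) strategy as first player on `G`,
then Left has a winning (resp. non-losing) strategy as first player on `G_u`. -/
theorem updated_game_first_player (G : Game) (hG : WellFormed G) (u : ℕ)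
    (hu : u ∈ G.V) (hu' : ({u} : Finset ℕ) ∉ G.EL) :
    (WinsAs G .L .L → WinsAs (subL G u) .L .L) ∧
    (NonLosingAs G .L .L → NonLosingAs (subL G u) .L .L) :=
  updated_first G hG u hu hu'
end APG
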